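/- Let L ≥ 1, let ψ : ℝ → ℝ be a bounded measurable function supported in [0,L] satisfying ∫ t^k ψ(t) dt = 0 for all integers 0 ≤ k ≤ M−1 (M vanishing moments, M ≥ 1). For j ∈ ℕ and k ∈ ℤ set ψ_{j,k}(t) = 2^{j/2} ψ(2^j t − k) and t₀ = 2^{−j} k. Let r be a real number with 0 < 2r < M, and let F : ℝ² → ℝ be a measurable function such that there exist a constant c₀ < ∞ and a two-variable polynomial P of total degree at most ⌊2r⌋ with |F(t,s) − P(t,s)| ≤ c₀ (|t − t₀| + |s − t₀|)^{2r} for all t, s ∈ [t₀, t₀ + 2^{−j}L]. Then |∫∫ F(t,s) ψ_{j,k}(t) ψ_{j,k}(s) dt ds| ≤ c₀ (2L)^{2r} ‖ψ‖_{L¹}² · 2^{−(2r+1)j}. -/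

import Mathlib

open MeasureTheory

/-- A measurable, bounded function with support in a compact interval is integrable. -/
lemma aux_integrable_of_bdd_supp {f : ℝ → ℝ} (hm : Measurable f) (B : ℝ)
    (hB : ∀ t, |f t| ≤ B) {a b : ℝ} (hsupp : Function.support f ⊆ Set.Icc a b) :
    Integrable f := by
  have hg : Integrable ((Set.Icc a b).indicator (fun _ => B)) := by
    rw [integrable_indicator_iff measurableSet_Icc]
    exact integrableOn_const measure_Icc_lt_top.ne
  refine hg.mono' hm.aestronglyMeasurable (Filter.Eventually.of_forall fun t => ?_)
  by_cases ht : t ∈ Set.Icc a b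
  · simpa [Set.indicator_of_mem ht, Real.norm_eq_abs] using hB t
  · have hf0 : f t = 0 := Function.notMem_support.1 fun hs => ht (hsupp hs)
    simp [hf0, Set.indicator_of_notMem ht]

/-- A continuous function times an integrable function with support in a compact interval
is integrable. -/
lemma aux_integrable_cont_mul {g f : ℝ → ℝ} (hg : Continuous g) (hf : Integrable f)
    {a b : ℝ} (hsupp : Function.support f ⊆ Set.Icc a b) :
    Integrable (fun t => g t * f t) := by
  obtain ⟨C, hC⟩ := isCompact_Icc.exists_bound_of_continuousOn 
    hg.continuousOn
  set C' := max C 0 with hC'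
  have hint : Integrable (fun t => C' * |f t|) := hf.abs.const_mul C'
  refine hint.mono' (hg.aestronglyMeasurable.mul hf.aestronglyMeasurable)
    (Filter.Eventually.of_forall fun t => ?_)
  by_cases ht : t ∈ Set.Icc a b
  · have h1 : ‖g t‖ ≤ C' := le_trans (hC t ht) (le_max_left _ _)
    have : ‖g t * f t‖ = ‖g t‖ * |f t| := by
      rw [norm_mul, Real.norm_eq_abs (f t)]
    rw [this]
    exact mul_le_mul_of_nonneg_right h1 (abs_nonneg _)
  · have hf0 : f t = 0 := Function.notMem_support.1 fun hs => ht (hsupp hs)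
    simp only [hf0, mul_zero, norm_zero]
    positivity

/-- Vanishing moments are preserved under affine change of variable. -/
lemma aux_moment_zero (ψ : ℝ → ℝ) (hψmeas : Measurable ψ) (B : ℝ) (hB : ∀ t, |ψ t| ≤ B)
    (L : ℝ) (hψsupp : Function.support ψ ⊆ Set.Icc 0 L)
    (M : ℕ) (hmom : ∀ m : ℕ, m < M → (∫ t : ℝ, t ^ m * ψ t) = 0)
    (a : ℝ) (ha : a ≠ 0) (k : ℝ) (n : ℕ) (hn : n < M) :
    (∫ t : ℝ, t ^ n * ψ (a * t - k)) = 0 := by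
  have hψint : Integrable ψ := aux_integrable_of_bdd_supp hψmeas B hB hψsupp
  set c : ℝ := a⁻¹ with hc
  set f : ℝ → ℝ := fun u => (c * (u + k)) ^ n * ψ u with hf
  have key : ∀ t : ℝ, t ^ n * ψ (a * t - k) = f (a * t + -k) := by
    intro t
    have h1 : a * t + -k + k = a * t := by ring
    simp only [hf, h1]
    rw [inv_mul_cancel_left₀ ha t, sub_eq_add_neg]
  have hcomp : (∫ t : ℝ, t ^ n * ψ (a * t - k)) = |a⁻¹| • ∫ u : ℝ, f u := by
    simp_rw [key]
    have := MeasureTheory.Measure.integral_comp_mul_left (fun x => f (x + -k)) a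
    rw [this, MeasureTheory.integral_add_right_eq_self f (-k)]
  rw [hcomp]
  have hfint : ∫ u : ℝ, f u = 0 := by
    have hexp : ∀ u : ℝ, f u =
        ∑ i ∈ Finset.range (n + 1),
          (c ^ i * (c * k) ^ (n - i) * (n.choose i : ℝ)) * (u ^ i * ψ u) := by
      intro u
      have h1 : (c * (u + k)) ^ n = (c * u + c * k) ^ n := by ring_nf
      rw [hf]
      simp only
      rw [h1, add_pow, Finset.sum_mul]
      refine Finset.sum_congr rfl fun i _ => ?_
      rw [mul_pow]
      ring
    simp_rw [hexp]
    rw [integral_finset_sum]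
    · refine Finset.sum_eq_zero fun i hi => ?_
      rw [integral_const_mul]
      have : (∫ u : ℝ, u ^ i * ψ u) = 0 :=
        hmom i (lt_of_le_of_lt (Nat.lt_succ_iff.1 (Finset.mem_range.1 hi)) hn)
      rw [this, mul_zero]
    · intro i _
      exact (aux_integrable_cont_mul (continuous_pow i) hψint hψsupp).const_mul _
  rw [hfint, smul_zero]

theorem stmt_5
    (L : ℝ) (hL : 1 ≤ L)
    (ψ : ℝ → ℝ) (hψmeas : Measurable ψ) (hψbdd : ∃ B : ℝ, ∀ t, |ψ t| ≤ B)
    (hψsupp : Function.support ψ ⊆ Set.Icc 0 L)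
    (M : ℕ) (hM : 1 ≤ M)
    (hmom : ∀ m : ℕ, m < M → (∫ t : ℝ, t ^ m * ψ t) = 0)
    (j : ℕ) (k : ℤ)
    (ψjk : ℝ → ℝ)
    (hψjk : ∀ t, ψjk t = 2 ^ ((j : ℝ) / 2) * ψ (2 ^ j * t - k))
    (t₀ : ℝ) (ht₀ : t₀ = (2 : ℝ) ^ (-(j : ℝ)) * k)
    (r : ℝ) (hr0 : 0 < 2 * r) (hrM : 2 * r < M)
    (F : ℝ × ℝ → ℝ) (hFmeas : Measurable F)
    (c₀ : ℝ) (P : MvPolynomial (Fin 2) ℝ) (hP : P.totalDegree ≤ ⌊2 * r⌋₊)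
    (happrox : ∀ t s : ℝ, t ∈ Set.Icc t₀ (t₀ + (2 : ℝ) ^ (-(j : ℝ)) * L) →
      s ∈ Set.Icc t₀ (t₀ + (2 : ℝ) ^ (-(j : ℝ)) * L) →
        |F (t, s) - MvPolynomial.eval ![t, s] P| ≤ c₀ * (|t - t₀| + |s - t₀|) ^ (2 * r : ℝ)) :
    |∫ t : ℝ, ∫ s : ℝ, F (t, s) * ψjk t * ψjk s|
      ≤ c₀ * (2 * L) ^ (2 * r : ℝ) * (∫ t : ℝ, |ψ t|) ^ 2 * (2 : ℝ) ^ (-(2 * r + 1) * j : ℝ) := by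
  obtain ⟨B, hB⟩ := hψbdd
  have hL0 : (0:ℝ) < L := by linarith
  set a : ℝ := 2 ^ j with haa
  have ha : (0:ℝ) < a := by positivity
  have hane : a ≠ 0 := ha.ne'
  have hrpow : (2:ℝ) ^ (-(j:ℝ)) = a⁻¹ := by
    rw [Real.rpow_neg (by norm_num), Real.rpow_natCast]
  have hj2 : (0:ℝ) < 2 ^ ((j:ℝ)/2) := Real.rpow_pos_of_pos (by norm_num) _
  have hψint : Integrable ψ := aux_integrable_of_bdd_supp hψmeas B hB hψsupp
  set δ : ℝ := a⁻¹ * L with hδ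
  have hδpos : 0 < δ := by positivity
  have hδeq : (2:ℝ) ^ (-(j:ℝ)) * L = δ := by rw [hrpow]
  set I : Set ℝ := Set.Icc t₀ (t₀ + (2:ℝ) ^ (-(j:ℝ)) * L) with hIdef
  have hψjkmeas : Measurable ψjk := by
    have : ψjk = fun t => 2 ^ ((j:ℝ)/2) * ψ (a * t - k) := funext hψjk
    rw [this]
    exact (hψmeas.comp ((measurable_id.const_mul a).sub_const _)).const_mul _
  -- support of ψjk
  have hsuppjk : Function.support ψjk ⊆ I := by
    intro t ht
    have hne : ψ (a * t - k) ≠ 0 := by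
      intro h0
      apply ht
      rw [hψjk t, h0, mul_zero]
    obtain ⟨h1, h2⟩ := hψsupp hne
    have ht₀' : t₀ = a⁻¹ * k := by rw [ht₀, hrpow]
    constructor
    · rw [ht₀']
      have hk : (k:ℝ) ≤ a * t := by linarith
      calc a⁻¹ * k ≤ a⁻¹ * (a * t) := mul_le_mul_of_nonneg_left hk (inv_nonneg.2 ha.le)
        _ = t := inv_mul_cancel_left₀ hane t
    · rw [ht₀', hrpow]
      have hk : a * t ≤ k + L := by linarith
      calc t = a⁻¹ * (a * t) := (inv_mul_cancel_left₀ hane t).symm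
        _ ≤ a⁻¹ * (k + L) := mul_le_mul_of_nonneg_left hk (inv_nonneg.2 ha.le)
        _ = a⁻¹ * k + a⁻¹ * L := by ring
  have hBjk : ∀ t, |ψjk t| ≤ 2 ^ ((j:ℝ)/2) * B := fun t => by
    rw [hψjk t, abs_mul, abs_of_pos hj2]
    exact mul_le_mul_of_nonneg_left (hB _) hj2.le
  have hjkint : Integrable ψjk := aux_integrable_of_bdd_supp hψjkmeas _ hBjk hsuppjk
  -- moments of ψjk vanish
  have hmomjk : ∀ n : ℕ, n < M → (∫ s : ℝ, s ^ n * ψjk s) = 0 := by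
    intro n hn
    have e : ∀ s : ℝ, s ^ n * ψjk s = 2 ^ ((j:ℝ)/2) * (s ^ n * ψ (a * s - k)) := by
      intro s; rw [hψjk s]; ring
    simp_rw [e]
    rw [integral_const_mul, aux_moment_zero ψ hψmeas B hB L hψsupp M hmom a hane k n hn, mul_zero]
  -- polynomial expansion
  have hQ : ∀ t s : ℝ, MvPolynomial.eval ![t, s] P
      = ∑ d ∈ P.support, MvPolynomial.coeff d P * (t ^ d 0 * s ^ d 1) := by
    intro t s
    rw [MvPolynomial.eval_eq']
    refine Finset.sum_congr rfl fun d _ => ?_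
    rw [Fin.prod_univ_two]
    simp
  have hfloor : P.totalDegree < M := lt_of_le_of_lt hP ((Nat.floor_lt hr0.le).2 hrM)
  have hdeg : ∀ d ∈ P.support, d 1 < M := by
    intro d hd
    have hsum := MvPolynomial.le_totalDegree hd
    have h1 : d 1 ≤ d.sum fun _ e => e := by
      by_cases h : d 1 = 0
      · simp [h]
      · rw [Finsupp.sum]
        exact Finset.single_le_sum (f := fun i => d i) (fun _ _ => Nat.zero_le _)
          (Finsupp.mem_support_iff.2 h)
    exact lt_of_le_of_lt (h1.trans hsum) hfloor
  have hmono_int : ∀ n : ℕ, Integrable (fun s => s ^ n * ψjk s) :=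
    fun n => aux_integrable_cont_mul (continuous_pow n) hjkint hsuppjk
  have hvanish : ∀ t : ℝ, (∫ s : ℝ, MvPolynomial.eval ![t, s] P * ψjk s) = 0 := by
    intro t
    have e : ∀ s : ℝ, MvPolynomial.eval ![t, s] P * ψjk s
        = ∑ d ∈ P.support, (MvPolynomial.coeff d P * t ^ d 0) * (s ^ d 1 * ψjk s) := by
      intro s
      rw [hQ t s, Finset.sum_mul]
      exact Finset.sum_congr rfl fun d _ => by ring
    simp_rw [e]
    rw [integral_finset_sum _ (fun d _ => (hmono_int (d 1)).const_mul _)]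
    refine Finset.sum_eq_zero fun d hd => ?_
    rw [integral_const_mul, hmomjk (d 1) (hdeg d hd), mul_zero]
  have hQcont : ∀ t : ℝ, Continuous fun s => MvPolynomial.eval ![t, s] P := by
    intro t
    have e : (fun s => MvPolynomial.eval ![t, s] P)
        = fun s => ∑ d ∈ P.support, MvPolynomial.coeff d P * (t ^ d 0 * s ^ d 1) :=
      funext fun s => hQ t s
    rw [e]
    exact continuous_finset_sum _ fun d _ =>
      continuous_const.mul (continuous_const.mul (continuous_pow _))
  -- the uniform bound K
  set K : ℝ := (2 * δ) ^ (2 * r : ℝ) with hK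
  have hKpos : 0 < K := Real.rpow_pos_of_pos (by positivity) _
  have hc₀ : 0 ≤ c₀ := by
    have hmem : t₀ + (2:ℝ) ^ (-(j:ℝ)) * L ∈ I :=
      Set.right_mem_Icc.2 (by rw [hδeq]; linarith)
    have h := happrox _ _ hmem hmem
    have hpos : (0:ℝ) < (|t₀ + (2:ℝ) ^ (-(j:ℝ)) * L - t₀| + |t₀ + (2:ℝ) ^ (-(j:ℝ)) * L - t₀|)
        ^ (2 * r : ℝ) := by
      apply Real.rpow_pos_of_pos
      have e : t₀ + (2:ℝ) ^ (-(j:ℝ)) * L - t₀ = δ := by rw [hδeq]; ring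
      rw [e, abs_of_pos hδpos]
      linarith
    nlinarith [abs_nonneg (F (t₀ + (2:ℝ) ^ (-(j:ℝ)) * L, t₀ + (2:ℝ) ^ (-(j:ℝ)) * L)
      - MvPolynomial.eval ![t₀ + (2:ℝ) ^ (-(j:ℝ)) * L, t₀ + (2:ℝ) ^ (-(j:ℝ)) * L] P)]
  have hdist : ∀ t ∈ I, ∀ s ∈ I, (|t - t₀| + |s - t₀|) ^ (2 * r : ℝ) ≤ K := by
    intro t ht s hs
    obtain ⟨ht1, ht2⟩ := ht
    obtain ⟨hs1, hs2⟩ := hs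
    rw [hδeq] at ht2 hs2
    have h1 : |t - t₀| ≤ δ := by rw [abs_of_nonneg (by linarith)]; linarith
    have h2 : |s - t₀| ≤ δ := by rw [abs_of_nonneg (by linarith)]; linarith
    rw [hK]
    exact Real.rpow_le_rpow (by positivity) (by linarith) hr0.le
  -- integrability of F(t,·)·ψjk for t ∈ I
  have hFint : ∀ t ∈ I, Integrable (fun s => F (t, s) * ψjk s) := by
    intro t ht
    obtain ⟨C, hC⟩ := isCompact_Icc.exists_bound_of_continuousOn (hQcont t).continuousOn
    refine (hjkint.abs.const_mul (C + c₀ * K)).mono'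
      ((hFmeas.comp (measurable_prodMk_left)).mul hψjkmeas).aestronglyMeasurable
      (Filter.Eventually.of_forall fun s => ?_)
    by_cases hs : s ∈ I
    · have h2 := happrox t s ht hs
      have h3 := hC s hs
      rw [Real.norm_eq_abs] at h3
      have h4 := hdist t ht s hs
      have h5 : c₀ * (|t - t₀| + |s - t₀|) ^ (2 * r : ℝ) ≤ c₀ * K :=
        mul_le_mul_of_nonneg_left h4 hc₀
      have h6 : |F (t, s)| ≤ |MvPolynomial.eval ![t, s] P|
          + |F (t, s) - MvPolynomial.eval ![t, s] P| := by
        have := abs_add_le (MvPolynomial.eval ![t, s] P) (F (t, s) - MvPolynomial.eval ![t, s] P)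
        simpa using this
      have h1 : |F (t, s)| ≤ C + c₀ * K := by linarith
      rw [Real.norm_eq_abs, abs_mul]
      exact mul_le_mul_of_nonneg_right h1 (abs_nonneg _)
    · have h0 : ψjk s = 0 := Function.notMem_support.1 fun hmem => hs (hsuppjk hmem)
      simp [h0]
  -- step 1 : replace F by F - P in the inner integral
  set G : ℝ → ℝ :=
    fun t => ∫ s : ℝ, (F (t, s) - MvPolynomial.eval ![t, s] P) * ψjk t * ψjk s with hG
  have step1 : ∀ t : ℝ, (∫ s : ℝ, F (t, s) * ψjk t * ψjk s) = G t := by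
    intro t
    by_cases ht : ψjk t = 0
    · simp [hG, ht]
    · have htI : t ∈ I := hsuppjk (Function.mem_support.2 ht)
      have hQint : Integrable (fun s => MvPolynomial.eval ![t, s] P * ψjk s) :=
        aux_integrable_cont_mul (hQcont t) hjkint hsuppjk
      have e1 : ∀ s : ℝ, F (t, s) * ψjk t * ψjk s = ψjk t * (F (t, s) * ψjk s) :=
        fun s => by ring
      have e2 : ∀ s : ℝ, (F (t, s) - MvPolynomial.eval ![t, s] P) * ψjk t * ψjk s
          = ψjk t * (F (t, s) * ψjk s - MvPolynomial.eval ![t, s] P * ψjk s) :=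
        fun s => by ring
      rw [hG]
      simp_rw [e1, e2]
      rw [integral_const_mul, integral_const_mul, integral_sub (hFint t htI) hQint,
        hvanish t, sub_zero]
  set Nj : ℝ := ∫ s : ℝ, |ψjk s| with hNj
  have hNjnn : 0 ≤ Nj := integral_nonneg fun s => abs_nonneg _
  -- step 2 : pointwise bound on G
  have step2 : ∀ t : ℝ, |G t| ≤ c₀ * K * Nj * |ψjk t| := by
    intro t
    by_cases ht : ψjk t = 0
    · simp [hG, ht]
    · have htI : t ∈ I := hsuppjk (Function.mem_support.2 ht)
      have h1 : |G t| ≤ ∫ s : ℝ,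
          |(F (t, s) - MvPolynomial.eval ![t, s] P) * ψjk t * ψjk s| := by
        have h0 := norm_integral_le_integral_norm (μ := volume)
          (fun s : ℝ => (F (t, s) - MvPolynomial.eval ![t, s] P) * ψjk t * ψjk s)
        simp only [Real.norm_eq_abs] at h0
        exact h0
      refine h1.trans ?_
      have h2 : (∫ s : ℝ, |(F (t, s) - MvPolynomial.eval ![t, s] P) * ψjk t * ψjk s|)
          ≤ ∫ s : ℝ, (c₀ * K * |ψjk t|) * |ψjk s| := by
        refine integral_mono_of_nonneg (Filter.Eventually.of_forall fun s => abs_nonneg _)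
          (hjkint.abs.const_mul _) (Filter.Eventually.of_forall fun s => ?_)
        dsimp only
        by_cases hs : s ∈ I
        · have h3 := happrox t s htI hs
          have h4 := hdist t htI s hs
          have h5 : |F (t, s) - MvPolynomial.eval ![t, s] P| ≤ c₀ * K :=
            h3.trans (mul_le_mul_of_nonneg_left h4 hc₀)
          rw [abs_mul, abs_mul]
          exact mul_le_mul_of_nonneg_right
            (mul_le_mul_of_nonneg_right h5 (abs_nonneg _)) (abs_nonneg _)
        · have h0 : ψjk s = 0 := Function.notMem_support.1 fun hmem => hs (hsuppjk hmem)
          simp [h0]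
      refine h2.trans ?_
      rw [integral_const_mul]
      exact le_of_eq (by ring)
  -- step 3 : combine
  have step3 : |∫ t : ℝ, ∫ s : ℝ, F (t, s) * ψjk t * ψjk s| ≤ c₀ * K * Nj * Nj := by
    have e : (∫ t : ℝ, ∫ s : ℝ, F (t, s) * ψjk t * ψjk s) = ∫ t : ℝ, G t :=
      integral_congr_ae (Filter.Eventually.of_forall step1)
    rw [e]
    have h1 : |∫ t : ℝ, G t| ≤ ∫ t : ℝ, |G t| := by
      have h0 := norm_integral_le_integral_norm (μ := volume) G
      simp only [Real.norm_eq_abs] at h0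
      exact h0
    refine h1.trans ?_
    have h2 : (∫ t : ℝ, |G t|) ≤ ∫ t : ℝ, (c₀ * K * Nj) * |ψjk t| := by
      refine integral_mono_of_nonneg (Filter.Eventually.of_forall fun t => abs_nonneg _)
        (hjkint.abs.const_mul _) (Filter.Eventually.of_forall fun t => ?_)
      exact step2 t
    refine h2.trans ?_
    rw [integral_const_mul]
  -- computation of Nj
  have hNψ : Nj = 2 ^ ((j:ℝ)/2) * (a⁻¹ * ∫ t : ℝ, |ψ t|) := by
    have e : ∀ t : ℝ, |ψjk t| = 2 ^ ((j:ℝ)/2) * |ψ (a * t - k)| := fun t => by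
      rw [hψjk t, abs_mul, abs_of_pos hj2]
    rw [hNj]
    simp_rw [e]
    rw [integral_const_mul]
    congr 1
    have e2 : ∀ t : ℝ, |ψ (a * t - k)| = (fun x => |ψ (x + -(k:ℝ))|) (a * t) := fun t => by
      simp [sub_eq_add_neg]
    simp_rw [e2]
    rw [MeasureTheory.Measure.integral_comp_mul_left (fun x => |ψ (x + -(k:ℝ))|) a]
    rw [MeasureTheory.integral_add_right_eq_self (fun x => |ψ x|) (-(k:ℝ))]
    rw [smul_eq_mul, abs_of_pos (inv_pos.2 ha)]
  -- final numeric identity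
  have hE : ∀ x y : ℝ, (2:ℝ) ^ x * (2:ℝ) ^ y = (2:ℝ) ^ (x + y) :=
    fun x y => (Real.rpow_add (by norm_num) x y).symm
  have hfinal : c₀ * K * Nj * Nj
      = c₀ * (2 * L) ^ (2 * r : ℝ) * (∫ t : ℝ, |ψ t|) ^ 2
        * (2:ℝ) ^ (-(2 * r + 1) * j : ℝ) := by
    rw [hNψ, hK, hδ]
    rw [show (2 * (a⁻¹ * L) : ℝ) = (2 * L) * a⁻¹ by ring]
    rw [← hrpow]
    rw [Real.mul_rpow (by positivity) (by positivity)]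
    rw [show ((2:ℝ) ^ (-(j:ℝ))) ^ (2 * r : ℝ) = (2:ℝ) ^ (-(j:ℝ) * (2 * r)) by
      rw [← Real.rpow_mul (by norm_num : (0:ℝ) ≤ 2)]]
    have hpow' : (2:ℝ) ^ (-(2 * r + 1) * j : ℝ)
        = (2:ℝ) ^ (-(j:ℝ) * (2 * r)) * (((2:ℝ) ^ ((j:ℝ)/2) * (2:ℝ) ^ (-(j:ℝ)))
          * ((2:ℝ) ^ ((j:ℝ)/2) * (2:ℝ) ^ (-(j:ℝ)))) := by
      simp only [hE]
      congr 1
      ring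
    rw [hpow']
    ring
  calc |∫ t : ℝ, ∫ s : ℝ, F (t, s) * ψjk t * ψjk s| ≤ c₀ * K * Nj * Nj := step3
    _ = _ := hfinal
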